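/- Fix a partition λ of n. The number of standard Young tableaux Q of shape λ satisfying des(Q) + λ₁ = n equals the number of fillings of the Young diagram of λ with entries from [λ₁] that strictly increase along rows and weakly increase down columns (i.e., the number of semistandard Young tableaux of the conjugate shape λ' with entries in [λ₁]). -/

import Mathlib

open Finset

/-- A semistandard Young tableau of shape `μ` is *standard* if its entries give a bijection
between the cells of `μ` and `{1, …, μ.card}`.  (Since the entries are then distinct, the
rows are automatically strictly increasing.) -/
def IsSYT {μ : YoungDiagram} (T : SemistandardYoungTableau μ) : Prop :=
  Set.BijOn (fun c : ℕ × ℕ => T c.1 c.2) ↑μ.cells ↑(Finset.Icc 1 μ.card)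

/-- The descent set of a standard Young tableau: the set of entries `i` such that `i + 1`
lies in a strictly lower row than `i`. -/
def sytDesSet {μ : YoungDiagram} (T : SemistandardYoungTableau μ) : Set ℕ :=
  {i | ∃ c₁ ∈ μ.cells, ∃ c₂ ∈ μ.cells, T c₁.1 c₁.2 = i ∧ T c₂.1 c₂.2 = i + 1 ∧ c₁.1 < c₂.1}

namespace Stmt18

/-! ### Arithmetic helpers for the lexicographic encoding -/

lemma enc_lt {N a b r s : ℕ} (hr : r < N) (hab : a < b) : a * N + r < b * N + s :=
  calc a * N + r < a * N + N := by omega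
    _ = (a + 1) * N := by ring
    _ ≤ b * N := Nat.mul_le_mul_right N hab
    _ ≤ b * N + s := Nat.le_add_right _ _

lemma enc_le_of_le {N a b r s : ℕ} (hs : s < N) (h : a * N + r ≤ b * N + s) : a ≤ b := by
  by_contra hab
  exact absurd (enc_lt hs (by omega) : b * N + s < a * N + r) (by omega)

variable (μ : YoungDiagram)

/-- The defining conditions of the right-hand side type. -/
def Good (f : ℕ → ℕ → ℕ) : Prop :=
  (∀ i j : ℕ, (i, j) ∉ μ → f i j = 0) ∧
  (∀ i j1 j2 : ℕ, j1 < j2 → (i, j2) ∈ μ → f i j1 < f i j2) ∧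
  (∀ i1 i2 j : ℕ, i1 < i2 → (i2, j) ∈ μ → f i1 j ≤ f i2 j) ∧
  (∀ i j : ℕ, (i, j) ∈ μ → 1 ≤ f i j ∧ f i j ≤ μ.rowLen 0)

/-- Encode the lexicographic order on (value, row) as a natural number key. -/
def key (f : ℕ → ℕ → ℕ) (c : ℕ × ℕ) : ℕ := f c.1 c.2 * (μ.card + 1) + c.1

lemma row_lt_card_succ {c : ℕ × ℕ} (hc : c ∈ μ.cells) : c.1 < μ.card + 1 := by
  have h1 : c.1 < μ.colLen c.2 := by
    rw [← YoungDiagram.mem_iff_lt_colLen]; simpa [YoungDiagram.mem_cells] using hc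
  have h2 : μ.colLen c.2 ≤ μ.card := by
    rw [YoungDiagram.colLen_eq_card]
    exact Finset.card_le_card (by unfold YoungDiagram.col; exact filter_subset _ _)
  omega

lemma key_lt_of_val_lt {f : ℕ → ℕ → ℕ} {c c' : ℕ × ℕ} (hc : c ∈ μ.cells)
    (h : f c.1 c.2 < f c'.1 c'.2) : key μ f c < key μ f c' :=
  enc_lt (row_lt_card_succ μ hc) h

lemma key_lt_of_val_eq {f : ℕ → ℕ → ℕ} {c c' : ℕ × ℕ}
    (h : f c.1 c.2 = f c'.1 c'.2) (hr : c.1 < c'.1) : key μ f c < key μ f c' := by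
  unfold key; rw [h]; omega

lemma val_le_of_key_le {f : ℕ → ℕ → ℕ} {c c' : ℕ × ℕ} (hc' : c' ∈ μ.cells)
    (h : key μ f c ≤ key μ f c') : f c.1 c.2 ≤ f c'.1 c'.2 :=
  enc_le_of_le (row_lt_card_succ μ hc') h

lemma row_lt_of_key_lt_of_val_eq {f : ℕ → ℕ → ℕ} {c c' : ℕ × ℕ}
    (h : key μ f c < key μ f c') (hv : f c.1 c.2 = f c'.1 c'.2) : c.1 < c'.1 := by
  unfold key at h; rw [hv] at h; omega

lemma key_inj {f : ℕ → ℕ → ℕ} {c c' : ℕ × ℕ} (hc : c ∈ μ.cells) (hc' : c' ∈ μ.cells)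
    (hrs : ∀ i j1 j2 : ℕ, j1 < j2 → (i, j2) ∈ μ → f i j1 < f i j2)
    (h : key μ f c = key μ f c') : c = c' := by
  have hval : f c.1 c.2 = f c'.1 c'.2 :=
    le_antisymm (val_le_of_key_le μ hc' h.le) (val_le_of_key_le μ hc h.ge)
  have hrow : c.1 = c'.1 := by
    unfold key at h; rw [hval] at h; omega
  have hcol : c.2 = c'.2 := by
    rcases Nat.lt_trichotomy c.2 c'.2 with hlt | heq | hgt
    · have h1 : f c.1 c.2 < f c.1 c'.2 := by
        refine hrs c.1 c.2 c'.2 hlt ?_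
        rw [hrow, Prod.mk.eta (p := c')]; simpa [YoungDiagram.mem_cells] using hc'
      have h2 : f c.1 c'.2 = f c'.1 c'.2 := by rw [hrow]
      omega
    · exact heq
    · have h1 : f c'.1 c'.2 < f c'.1 c.2 := by
        refine hrs c'.1 c'.2 c.2 hgt ?_
        rw [← hrow, Prod.mk.eta (p := c)]; simpa [YoungDiagram.mem_cells] using hc
      have h2 : f c'.1 c.2 = f c.1 c.2 := by rw [hrow]
      omega
  exact Prod.ext hrow hcol

/-- The rank of a cell with respect to the key order. -/
noncomputable def rk (f : ℕ → ℕ → ℕ) (c : ℕ × ℕ) : ℕ :=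
  (μ.cells.filter (fun c' => key μ f c' ≤ key μ f c)).card

variable {μ}

lemma rk_pos {f : ℕ → ℕ → ℕ} {c : ℕ × ℕ} (hc : c ∈ μ.cells) : 1 ≤ rk μ f c :=
  Finset.card_pos.mpr ⟨c, Finset.mem_filter.mpr ⟨hc, le_refl _⟩⟩

lemma rk_le {f : ℕ → ℕ → ℕ} {c : ℕ × ℕ} : rk μ f c ≤ μ.card :=
  Finset.card_le_card (filter_subset _ _)

lemma rk_lt_rk {f : ℕ → ℕ → ℕ} {c c' : ℕ × ℕ} (hc' : c' ∈ μ.cells)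
    (h : key μ f c < key μ f c') : rk μ f c < rk μ f c' := by
  apply Finset.card_lt_card
  constructor
  · intro x hx
    rw [Finset.mem_filter] at hx ⊢
    exact ⟨hx.1, hx.2.trans h.le⟩
  · intro hsub
    have := hsub (Finset.mem_filter.mpr ⟨hc', le_refl _⟩)
    rw [Finset.mem_filter] at this
    omega

lemma key_lt_of_rk_lt {f : ℕ → ℕ → ℕ} {c c' : ℕ × ℕ} (hc : c ∈ μ.cells) (hc' : c' ∈ μ.cells)
    (hrs : ∀ i j1 j2 : ℕ, j1 < j2 → (i, j2) ∈ μ → f i j1 < f i j2)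
    (h : rk μ f c < rk μ f c') : key μ f c < key μ f c' := by
  rcases Nat.lt_trichotomy (key μ f c) (key μ f c') with hlt | heq | hgt
  · exact hlt
  · rw [key_inj μ hc hc' hrs heq] at h; omega
  · exact absurd (rk_lt_rk hc hgt) (by omega)

lemma rk_injOn {f : ℕ → ℕ → ℕ}
    (hrs : ∀ i j1 j2 : ℕ, j1 < j2 → (i, j2) ∈ μ → f i j1 < f i j2)
    {c c' : ℕ × ℕ} (hc : c ∈ μ.cells) (hc' : c' ∈ μ.cells)
    (h : rk μ f c = rk μ f c') : c = c' := by
  rcases Nat.lt_trichotomy (key μ f c) (key μ f c') with hlt | heq | hgt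
  · exact absurd (rk_lt_rk hc' hlt) (by omega)
  · exact key_inj μ hc hc' hrs heq
  · exact absurd (rk_lt_rk hc hgt) (by omega)

lemma rk_surj {f : ℕ → ℕ → ℕ}
    (hrs : ∀ i j1 j2 : ℕ, j1 < j2 → (i, j2) ∈ μ → f i j1 < f i j2)
    {v : ℕ} (hv : v ∈ Finset.Icc 1 μ.card) : ∃ c ∈ μ.cells, rk μ f c = v := by
  have h := Finset.surj_on_of_inj_on_of_card_le (s := μ.cells) (t := Finset.Icc 1 μ.card)
    (fun c _ => rk μ f c) (fun c hc => Finset.mem_Icc.mpr ⟨rk_pos hc, rk_le⟩)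
    (fun c c' hc hc' h => rk_injOn hrs hc hc' h)
    (by rw [Nat.card_Icc]; rfl)
  obtain ⟨c, hc, hrkc⟩ := h v hv
  exact ⟨c, hc, hrkc.symm⟩


/-! ### Machinery for standard Young tableaux -/

open scoped Classical

/-- The descent predicate. -/
def desPred (T : SemistandardYoungTableau μ) (v : ℕ) : Prop :=
  ∃ c₁ ∈ μ.cells, ∃ c₂ ∈ μ.cells, T c₁.1 c₁.2 = v ∧ T c₂.1 c₂.2 = v + 1 ∧ c₁.1 < c₂.1

/-- The descent set as a finset. -/
noncomputable def desF (T : SemistandardYoungTableau μ) : Finset ℕ :=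
  (Finset.Icc 1 (μ.card - 1)).filter (desPred T)

/-- The non-descent set as a finset. -/
noncomputable def nonDesF (T : SemistandardYoungTableau μ) : Finset ℕ :=
  (Finset.Icc 1 (μ.card - 1)).filter (fun v => ¬ desPred T v)

open scoped Classical in
/-- The cell of a standard Young tableau holding the value `v`. -/
noncomputable def pos (T : SemistandardYoungTableau μ) (v : ℕ) : ℕ × ℕ :=
  if h : ∃ c ∈ μ.cells, T c.1 c.2 = v then h.choose else (0, 0)

section SYT

variable {T : SemistandardYoungTableau μ} (hT : IsSYT T)
include hT

lemma val_mem_Icc {c : ℕ × ℕ} (hc : c ∈ μ.cells) : T c.1 c.2 ∈ Finset.Icc 1 μ.card := by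
  have := hT.mapsTo (by simpa using hc)
  simpa using this

lemma exists_pos {v : ℕ} (hv : v ∈ Finset.Icc 1 μ.card) : ∃ c ∈ μ.cells, T c.1 c.2 = v := by
  have := hT.surjOn (by simpa using hv)
  obtain ⟨c, hc, hcv⟩ := this
  exact ⟨c, by simpa using hc, hcv⟩

lemma pos_spec {v : ℕ} (hv : v ∈ Finset.Icc 1 μ.card) :
    pos T v ∈ μ.cells ∧ T (pos T v).1 (pos T v).2 = v := by
  have h := exists_pos hT hv
  rw [pos, dif_pos h]
  exact ⟨h.choose_spec.1, h.choose_spec.2⟩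

lemma pos_unique {v : ℕ} (hv : v ∈ Finset.Icc 1 μ.card) {c : ℕ × ℕ} (hc : c ∈ μ.cells)
    (h : T c.1 c.2 = v) : c = pos T v := by
  have hs := pos_spec hT hv
  exact hT.injOn (by simpa using hc) (by simpa using hs.1) (by simp [h, hs.2])

lemma mem_Icc_of_des {v : ℕ} (h : desPred T v) : v ∈ Finset.Icc 1 (μ.card - 1) := by
  obtain ⟨c₁, hc₁, c₂, hc₂, h1, h2, _⟩ := h
  have hv1 := val_mem_Icc hT hc₁
  have hv2 := val_mem_Icc hT hc₂
  rw [h1] at hv1; rw [h2] at hv2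
  simp only [Finset.mem_Icc] at *
  omega

lemma sytDesSet_eq : sytDesSet T = ↑(desF T) := by
  ext v
  simp only [sytDesSet, Set.mem_setOf_eq, desF, Finset.coe_filter, Set.mem_setOf_eq, desPred]
  constructor
  · intro h
    exact ⟨by simpa using mem_Icc_of_des hT h, h⟩
  · exact fun h => h.2

lemma card_sytDesSet : Nat.card (sytDesSet T) = (desF T).card := by
  rw [sytDesSet_eq hT, Nat.card_coe_set_eq, Set.ncard_coe_finset]

lemma des_row_lt {v : ℕ} (hv : v ∈ Finset.Icc 1 (μ.card - 1)) (h : desPred T v) :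
    (pos T v).1 < (pos T (v + 1)).1 := by
  obtain ⟨c₁, hc₁, c₂, hc₂, h1, h2, hlt⟩ := h
  simp only [Finset.mem_Icc] at hv
  have hn : 2 ≤ μ.card := by omega
  have e1 : c₁ = pos T v := pos_unique hT (Finset.mem_Icc.mpr ⟨by omega, by omega⟩) hc₁ h1
  have e2 : c₂ = pos T (v + 1) := pos_unique hT (Finset.mem_Icc.mpr ⟨by omega, by omega⟩) hc₂ h2
  rw [← e1, ← e2]
  exact hlt

lemma row_mono : ∀ m a : ℕ, 1 ≤ a → a + m ≤ μ.card →
    (∀ v ∈ Finset.Ico a (a + m), desPred T v) →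
    (pos T a).1 + m ≤ (pos T (a + m)).1 := by
  intro m
  induction m with
  | zero => intro a _ _ _; simp
  | succ m ih =>
    intro a ha hle hdes
    have h1 : (pos T a).1 + m ≤ (pos T (a + m)).1 :=
      ih a ha (by omega) (fun v hv => hdes v (by simp only [Finset.mem_Ico] at *; omega))
    have h2 : (pos T (a + m)).1 < (pos T (a + m + 1)).1 := by
      apply des_row_lt hT
      · simp only [Finset.mem_Icc]; omega
      · exact hdes (a + m) (by simp only [Finset.mem_Ico]; omega)
    have : a + (m + 1) = (a + m) + 1 := by omega
    rw [this]
    omega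

end SYT

/-- The filling associated to a standard Young tableau: each cell receives one plus the
number of non-descents below its entry. -/
noncomputable def fOf (T : SemistandardYoungTableau μ) (i j : ℕ) : ℕ :=
  if (i, j) ∈ μ then 1 + ((nonDesF T).filter (fun v => v < T i j)).card else 0

lemma fOf_apply {T : SemistandardYoungTableau μ} {i j : ℕ} (hc : (i, j) ∈ μ) :
    fOf T i j = 1 + ((nonDesF T).filter (fun v => v < T i j)).card := if_pos hc

lemma filter_lt_mono (s : Finset ℕ) {a b : ℕ} (h : a ≤ b) :
    s.filter (fun v => v < a) ⊆ s.filter (fun v => v < b) := fun u hu => by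
  rw [Finset.mem_filter] at hu ⊢; exact ⟨hu.1, by omega⟩

lemma T_lt_of_row {T : SemistandardYoungTableau μ} (hT : IsSYT T) {i j1 j2 : ℕ}
    (hj : j1 < j2) (hcell : (i, j2) ∈ μ) : T i j1 < T i j2 := by
  have hcell1 : (i, j1) ∈ μ := μ.up_left_mem (le_refl i) hj.le hcell
  have hle := T.row_weak hj hcell
  rcases hle.lt_or_eq with h | h
  · exact h
  · exfalso
    have : ((i, j1) : ℕ × ℕ) = (i, j2) := hT.injOn
      (by simpa using hcell1) (by simpa using hcell) (by simpa using h)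
    simp at this
    omega

lemma no_nondes_row_step {T : SemistandardYoungTableau μ} (hT : IsSYT T) {c c' : ℕ × ℕ}
    (hc : c ∈ μ.cells) (hc' : c' ∈ μ.cells) (hab : T c.1 c.2 < T c'.1 c'.2)
    (hnone : ∀ v ∈ nonDesF T, ¬ (T c.1 c.2 ≤ v ∧ v < T c'.1 c'.2)) : c.1 < c'.1 := by
  set a := T c.1 c.2 with ha
  set b := T c'.1 c'.2 with hb
  have hamem := val_mem_Icc hT hc
  have hbmem := val_mem_Icc hT hc'
  simp only [Finset.mem_Icc] at hamem hbmem
  have hdes : ∀ v ∈ Finset.Ico a (a + (b - a)), desPred T v := by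
    intro v hv
    simp only [Finset.mem_Ico] at hv
    by_contra hnd
    exact hnone v (Finset.mem_filter.mpr ⟨Finset.mem_Icc.mpr ⟨by omega, by omega⟩, hnd⟩)
      ⟨by omega, by omega⟩
  have hmono := row_mono hT (b - a) a (by omega) (by omega) hdes
  have e1 : c = pos T a := pos_unique hT (Finset.mem_Icc.mpr ⟨by omega, by omega⟩) hc rfl
  have e2 : c' = pos T (a + (b - a)) :=
    pos_unique hT (Finset.mem_Icc.mpr ⟨by omega, by omega⟩) hc' (by omega)
  rw [← e1, ← e2] at hmono
  omega

lemma exists_nondes_of_row {T : SemistandardYoungTableau μ} (hT : IsSYT T) {i j1 j2 : ℕ}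
    (hj : j1 < j2) (hcell : (i, j2) ∈ μ) :
    ∃ v ∈ nonDesF T, T i j1 ≤ v ∧ v < T i j2 := by
  by_contra hnone
  push_neg at hnone
  have hcell1 : (i, j1) ∈ μ := μ.up_left_mem (le_refl i) hj.le hcell
  have := no_nondes_row_step hT (c := (i, j1)) (c' := (i, j2))
    (by simpa using hcell1) (by simpa using hcell) (T_lt_of_row hT hj hcell)
    (fun v hv h => absurd h.2 (Nat.not_lt.mpr (hnone v hv h.1)))
  simp at this

lemma fOf_row_strict {T : SemistandardYoungTableau μ} (hT : IsSYT T) {i j1 j2 : ℕ}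
    (hj : j1 < j2) (hcell : (i, j2) ∈ μ) : fOf T i j1 < fOf T i j2 := by
  have hcell1 : (i, j1) ∈ μ := μ.up_left_mem (le_refl i) hj.le hcell
  rw [fOf_apply hcell1, fOf_apply hcell]
  obtain ⟨v, hv, hv1, hv2⟩ := exists_nondes_of_row hT hj hcell
  have hlt : ((nonDesF T).filter (fun u => u < T i j1)).card <
      ((nonDesF T).filter (fun u => u < T i j2)).card := by
    apply Finset.card_lt_card
    constructor
    · exact filter_lt_mono _ (T_lt_of_row hT hj hcell).le
    · intro hsub
      have := hsub (Finset.mem_filter.mpr ⟨hv, hv2⟩)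
      rw [Finset.mem_filter] at this
      omega
  omega

lemma fOf_col_weak {T : SemistandardYoungTableau μ} {i1 i2 j : ℕ}
    (hi : i1 < i2) (hcell : (i2, j) ∈ μ) : fOf T i1 j ≤ fOf T i2 j := by
  have hcell1 : (i1, j) ∈ μ := μ.up_left_mem hi.le (le_refl j) hcell
  rw [fOf_apply hcell1, fOf_apply hcell]
  have := Finset.card_le_card (filter_lt_mono (nonDesF T) (T.col_strict hi hcell).le)
  omega

lemma card_nonDesF {T : SemistandardYoungTableau μ}
    (hcond : (desF T).card + μ.rowLen 0 = μ.card) (hk : 1 ≤ μ.rowLen 0) :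
    (nonDesF T).card = μ.rowLen 0 - 1 := by
  have hsum : (desF T).card + (nonDesF T).card = μ.card - 1 := by
    rw [desF, nonDesF, Finset.card_filter_add_card_filter_not, Nat.card_Icc]
    omega
  omega

lemma rowLen_pos {i j : ℕ} (hcell : (i, j) ∈ μ) : 1 ≤ μ.rowLen 0 := by
  rw [Nat.succ_le_iff, ← YoungDiagram.mem_iff_lt_rowLen]
  exact μ.up_left_mem (Nat.zero_le i) (Nat.zero_le j) hcell

lemma good_fOf {T : SemistandardYoungTableau μ} (hT : IsSYT T)
    (hcond : (desF T).card + μ.rowLen 0 = μ.card) : Good μ (fOf T) := by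
  refine ⟨fun i j h => if_neg h, fun i j1 j2 hj hcell => fOf_row_strict hT hj hcell,
    fun i1 i2 j hi hcell => fOf_col_weak hi hcell, fun i j hcell => ?_⟩
  have hnd := card_nonDesF hcond (rowLen_pos hcell)
  rw [fOf_apply hcell]
  have hle : ((nonDesF T).filter (fun u => u < T i j)).card ≤ (nonDesF T).card :=
    Finset.card_le_card (Finset.filter_subset _ _)
  have := rowLen_pos hcell
  omega

lemma key_lt_of_T_lt {T : SemistandardYoungTableau μ} (hT : IsSYT T) {c c' : ℕ × ℕ}
    (hc : c ∈ μ.cells) (hc' : c' ∈ μ.cells)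
    (h : T c.1 c.2 < T c'.1 c'.2) : key μ (fOf T) c < key μ (fOf T) c' := by
  have hcμ : (c.1, c.2) ∈ μ := by rw [Prod.mk.eta]; simpa [YoungDiagram.mem_cells] using hc
  have hc'μ : (c'.1, c'.2) ∈ μ := by rw [Prod.mk.eta]; simpa [YoungDiagram.mem_cells] using hc'
  have hsub := filter_lt_mono (nonDesF T) h.le
  have hfle : fOf T c.1 c.2 ≤ fOf T c'.1 c'.2 := by
    rw [fOf_apply hcμ, fOf_apply hc'μ]
    have := Finset.card_le_card hsub
    omega
  rcases hfle.lt_or_eq with hflt | hfeq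
  · exact key_lt_of_val_lt μ hc hflt
  · have hcards : ((nonDesF T).filter (fun u => u < T c.1 c.2)).card =
        ((nonDesF T).filter (fun u => u < T c'.1 c'.2)).card := by
      rw [fOf_apply hcμ, fOf_apply hc'μ] at hfeq
      omega
    have heq := Finset.eq_of_subset_of_card_le hsub (le_of_eq hcards.symm)
    have hnone : ∀ v ∈ nonDesF T, ¬ (T c.1 c.2 ≤ v ∧ v < T c'.1 c'.2) := by
      rintro v hv ⟨h1, h2⟩
      have hmem : v ∈ (nonDesF T).filter (fun u => u < T c'.1 c'.2) :=
        Finset.mem_filter.mpr ⟨hv, h2⟩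
      rw [← heq, Finset.mem_filter] at hmem
      omega
    exact key_lt_of_val_eq μ hfeq (no_nondes_row_step hT hc hc' h hnone)

lemma rk_fOf {T : SemistandardYoungTableau μ} (hT : IsSYT T) {c : ℕ × ℕ}
    (hc : c ∈ μ.cells) : rk μ (fOf T) c = T c.1 c.2 := by
  have hfilter : μ.cells.filter (fun c' => key μ (fOf T) c' ≤ key μ (fOf T) c) =
      μ.cells.filter (fun c' => T c'.1 c'.2 ≤ T c.1 c.2) := by
    apply Finset.filter_congr
    intro c' hc'
    constructor
    · intro hkey
      by_contra hTgt
      push_neg at hTgt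
      exact absurd (key_lt_of_T_lt hT hc hc' hTgt) (by omega)
    · intro hTle
      rcases hTle.lt_or_eq with hlt | heq
      · exact (key_lt_of_T_lt hT hc' hc hlt).le
      · have : c' = c := hT.injOn (by simpa using hc') (by simpa using hc) (by simpa using heq)
        rw [this]
  have hTc := val_mem_Icc hT hc
  simp only [Finset.mem_Icc] at hTc
  have hcard : (μ.cells.filter (fun c' => T c'.1 c'.2 ≤ T c.1 c.2)).card =
      (Finset.Icc 1 (T c.1 c.2)).card := by
    apply Finset.card_bij (fun c' _ => T c'.1 c'.2)
    · intro c' hc'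
      rw [Finset.mem_filter] at hc'
      have := val_mem_Icc hT hc'.1
      simp only [Finset.mem_Icc] at this ⊢
      exact ⟨this.1, hc'.2⟩
    · intro c1 h1 c2 h2 heq
      rw [Finset.mem_filter] at h1 h2
      exact hT.injOn (by simpa using h1.1) (by simpa using h2.1) (by simpa using heq)
    · intro v hv
      simp only [Finset.mem_Icc] at hv
      obtain ⟨c', hc', hTc'⟩ := exists_pos hT (Finset.mem_Icc.mpr ⟨hv.1, by omega⟩)
      exact ⟨c', Finset.mem_filter.mpr ⟨hc', by omega⟩, hTc'⟩
  rw [rk, hfilter, hcard, Nat.card_Icc]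
  omega

/-! ### From a good filling to a standard Young tableau -/

section FtoSYT

variable {f : ℕ → ℕ → ℕ}

lemma mem_of_cells {c : ℕ × ℕ} (hc : c ∈ μ.cells) : (c.1, c.2) ∈ μ := by
  rw [Prod.mk.eta]; simpa [YoungDiagram.mem_cells] using hc

lemma cells_of_mem {c : ℕ × ℕ} (hc : (c.1, c.2) ∈ μ) : c ∈ μ.cells := by
  rw [YoungDiagram.mem_cells, ← Prod.mk.eta (p := c)]; exact hc

/-- The standardization of a good filling. -/
noncomputable def tabT (f : ℕ → ℕ → ℕ) (hf : Good μ f) : SemistandardYoungTableau μ where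
  entry i j := if (i, j) ∈ μ then rk μ f (i, j) else 0
  row_weak' := by
    intro i j1 j2 hj hcell
    have hcell1 : (i, j1) ∈ μ := μ.up_left_mem (le_refl i) hj.le hcell
    show (if (i, j1) ∈ μ then rk μ f (i, j1) else 0) ≤ (if (i, j2) ∈ μ then rk μ f (i, j2) else 0)
    rw [if_pos hcell1, if_pos hcell]
    refine (rk_lt_rk (cells_of_mem (c := (i, j2)) hcell) ?_).le
    exact key_lt_of_val_lt μ (cells_of_mem (c := (i, j1)) hcell1) (hf.2.1 i j1 j2 hj hcell)
  col_strict' := by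
    intro i1 i2 j hi hcell
    have hcell1 : (i1, j) ∈ μ := μ.up_left_mem hi.le (le_refl j) hcell
    show (if (i1, j) ∈ μ then rk μ f (i1, j) else 0) < (if (i2, j) ∈ μ then rk μ f (i2, j) else 0)
    rw [if_pos hcell1, if_pos hcell]
    refine rk_lt_rk (cells_of_mem (c := (i2, j)) hcell) ?_
    rcases (hf.2.2.1 i1 i2 j hi hcell).lt_or_eq with hlt | heq
    · exact key_lt_of_val_lt μ (cells_of_mem (c := (i1, j)) hcell1) hlt
    · exact key_lt_of_val_eq μ heq hi
  zeros' := by intro i j h; exact if_neg h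

lemma tabT_apply (hf : Good μ f) {c : ℕ × ℕ} (hc : c ∈ μ.cells) :
    tabT f hf c.1 c.2 = rk μ f c := by
  show (if (c.1, c.2) ∈ μ then rk μ f (c.1, c.2) else 0) = rk μ f c
  rw [if_pos (mem_of_cells hc), Prod.mk.eta]

lemma isSYT_tabT (hf : Good μ f) : IsSYT (tabT f hf) := by
  constructor
  · intro c hc
    rw [Finset.mem_coe] at hc
    have hc' : c ∈ μ.cells := hc
    simp only [tabT_apply hf hc', Finset.coe_Icc, Set.mem_Icc]
    exact ⟨rk_pos hc', rk_le⟩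
  constructor
  · intro c hc c' hc' heq
    have hc2 : c ∈ μ.cells := hc
    have hc2' : c' ∈ μ.cells := hc'
    have heq' : tabT f hf c.1 c.2 = tabT f hf c'.1 c'.2 := heq
    rw [tabT_apply hf hc2, tabT_apply hf hc2'] at heq'
    exact rk_injOn hf.2.1 hc2 hc2' heq'
  · intro v hv
    simp only [Finset.coe_Icc, Set.mem_Icc] at hv
    obtain ⟨c, hc, hrk⟩ := rk_surj hf.2.1 (Finset.mem_Icc.mpr hv)
    exact ⟨c, hc, show tabT f hf c.1 c.2 = v by rw [tabT_apply hf hc]; exact hrk⟩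

lemma row_gap (hf : Good μ f) : ∀ d i j, (i, j + d) ∈ μ → f i j + d ≤ f i (j + d) := by
  intro d
  induction d with
  | zero => intro i j _; simp
  | succ d ih =>
    intro i j hcell
    have hcell1 : (i, j + d) ∈ μ := μ.up_left_mem (le_refl i) (by omega) hcell
    have h1 := ih i j hcell1
    have h2 := hf.2.1 i (j + d) (j + d + 1) (by omega) (by rw [show j + (d+1) = j + d + 1 by omega] at hcell; exact hcell)
    have : j + (d + 1) = j + d + 1 := by omega
    rw [this]
    omega

lemma f_zero_row (hf : Good μ f) {j : ℕ} (hj : j < μ.rowLen 0) : f 0 j = j + 1 := by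
  have hcell : (0, j) ∈ μ := YoungDiagram.mem_iff_lt_rowLen.mpr hj
  have hcell0 : (0, (0:ℕ)) ∈ μ := μ.up_left_mem (le_refl 0) (Nat.zero_le j) hcell
  have hlast : (0, μ.rowLen 0 - 1) ∈ μ := YoungDiagram.mem_iff_lt_rowLen.mpr (by omega)
  have hlow : f 0 0 + j ≤ f 0 j := by
    have := row_gap hf j 0 0
    simp only [Nat.zero_add] at this
    exact this hcell
  have hup : f 0 j + (μ.rowLen 0 - 1 - j) ≤ f 0 (μ.rowLen 0 - 1) := by
    have := row_gap hf (μ.rowLen 0 - 1 - j) 0 j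
    rw [show j + (μ.rowLen 0 - 1 - j) = μ.rowLen 0 - 1 by omega] at this
    exact this hlast
  have h1 := hf.2.2.2 0 0 hcell0
  have h2 := hf.2.2.2 0 (μ.rowLen 0 - 1) hlast
  omega


/-- value of `f` at the cell of `tabT f hf` holding the entry `v`. -/
noncomputable def Fv (hf : Good μ f) (v : ℕ) : ℕ :=
  f (pos (tabT f hf) v).1 (pos (tabT f hf) v).2

variable (hf : Good μ f)

lemma pos_tab_spec {v : ℕ} (hv : v ∈ Finset.Icc 1 μ.card) :
    pos (tabT f hf) v ∈ μ.cells ∧ rk μ f (pos (tabT f hf) v) = v := by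
  have h := pos_spec (isSYT_tabT hf) hv
  exact ⟨h.1, by rw [← tabT_apply hf h.1]; exact h.2⟩

lemma key_pos_lt {v w : ℕ} (hv : v ∈ Finset.Icc 1 μ.card) (hw : w ∈ Finset.Icc 1 μ.card)
    (hvw : v < w) : key μ f (pos (tabT f hf) v) < key μ f (pos (tabT f hf) w) := by
  obtain ⟨hc1, hr1⟩ := pos_tab_spec hf hv
  obtain ⟨hc2, hr2⟩ := pos_tab_spec hf hw
  exact key_lt_of_rk_lt hc1 hc2 hf.2.1 (by omega)

lemma Fv_mono {v w : ℕ} (hv : v ∈ Finset.Icc 1 μ.card) (hw : w ∈ Finset.Icc 1 μ.card)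
    (hvw : v < w) : Fv hf v ≤ Fv hf w :=
  val_le_of_key_le μ (pos_tab_spec hf hw).1 (key_pos_lt hf hv hw hvw).le

/-- There is no cell with an intermediate `f`-value between consecutive entries. -/
lemma no_intermediate {v : ℕ} (hv : v ∈ Finset.Icc 1 (μ.card - 1)) {u : ℕ}
    (h1 : Fv hf v < u) (h2 : u < Fv hf (v + 1)) : False := by
  simp only [Finset.mem_Icc] at hv
  have hv1 : v ∈ Finset.Icc 1 μ.card := Finset.mem_Icc.mpr ⟨by omega, by omega⟩
  have hv2 : v + 1 ∈ Finset.Icc 1 μ.card := Finset.mem_Icc.mpr ⟨by omega, by omega⟩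
  obtain ⟨hc1, hr1⟩ := pos_tab_spec hf hv1
  obtain ⟨hc2, hr2⟩ := pos_tab_spec hf hv2
  have hub : 1 ≤ Fv hf (v + 1) ∧ Fv hf (v + 1) ≤ μ.rowLen 0 := hf.2.2.2 _ _ (mem_of_cells hc2)
  have hu1 : 1 ≤ u := by omega
  have huk : u ≤ μ.rowLen 0 := by omega
  have hecell : (0, u - 1) ∈ μ := YoungDiagram.mem_iff_lt_rowLen.mpr (by omega)
  have heval : f 0 (u - 1) = u := by rw [f_zero_row hf (by omega)]; omega
  have hk1 : key μ f (pos (tabT f hf) v) < key μ f ((0, u - 1)) :=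
    key_lt_of_val_lt μ hc1 (by show Fv hf v < f 0 (u-1); omega)
  have hk2 : key μ f ((0, u - 1)) < key μ f (pos (tabT f hf) (v + 1)) :=
    key_lt_of_val_lt μ (cells_of_mem (c := (0, u - 1)) hecell) (by show f 0 (u-1) < Fv hf (v+1); omega)
  have hrk1 := rk_lt_rk (cells_of_mem (c := (0, u - 1)) hecell) hk1
  have hrk2 := rk_lt_rk hc2 hk2
  omega

lemma step_tab {v : ℕ} (hv : v ∈ Finset.Icc 1 (μ.card - 1)) :
    Fv hf (v + 1) = Fv hf v ∨ Fv hf (v + 1) = Fv hf v + 1 := by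
  have hv' := hv
  simp only [Finset.mem_Icc] at hv'
  have hle : Fv hf v ≤ Fv hf (v + 1) :=
    Fv_mono hf (Finset.mem_Icc.mpr ⟨by omega, by omega⟩)
      (Finset.mem_Icc.mpr ⟨by omega, by omega⟩) (by omega)
  by_contra hne
  push_neg at hne
  exact no_intermediate hf hv (u := Fv hf v + 1) (by omega) (by omega)

lemma des_iff {v : ℕ} (hv : v ∈ Finset.Icc 1 (μ.card - 1)) :
    desPred (tabT f hf) v ↔ Fv hf (v + 1) = Fv hf v := by
  have hv' := hv
  simp only [Finset.mem_Icc] at hv'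
  have hv1 : v ∈ Finset.Icc 1 μ.card := Finset.mem_Icc.mpr ⟨by omega, by omega⟩
  have hv2 : v + 1 ∈ Finset.Icc 1 μ.card := Finset.mem_Icc.mpr ⟨by omega, by omega⟩
  obtain ⟨hc1, hr1⟩ := pos_tab_spec hf hv1
  obtain ⟨hc2, hr2⟩ := pos_tab_spec hf hv2
  have hkey : key μ f (pos (tabT f hf) v) < key μ f (pos (tabT f hf) (v + 1)) :=
    key_pos_lt hf hv1 hv2 (by omega)
  constructor
  · intro hdes
    obtain ⟨d₁, hd₁, d₂, hd₂, he1, he2, hrow⟩ := hdes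
    have e1 : d₁ = pos (tabT f hf) v := pos_unique (isSYT_tabT hf) hv1 hd₁ he1
    have e2 : d₂ = pos (tabT f hf) (v + 1) := pos_unique (isSYT_tabT hf) hv2 hd₂ he2
    rw [e1, e2] at hrow
    by_contra hne
    have hlt : Fv hf v < Fv hf (v + 1) :=
      lt_of_le_of_ne (Fv_mono hf hv1 hv2 (by omega)) (fun h => hne h.symm)
    set w := Fv hf (v + 1) with hw
    have hub : 1 ≤ Fv hf (v + 1) ∧ Fv hf (v + 1) ≤ μ.rowLen 0 := hf.2.2.2 _ _ (mem_of_cells hc2)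
    have hwk : w ≤ μ.rowLen 0 := hub.2
    have hw1 : 1 ≤ w := hub.1
    have hecell : (0, w - 1) ∈ μ := YoungDiagram.mem_iff_lt_rowLen.mpr (by omega)
    have heval : f 0 (w - 1) = w := by rw [f_zero_row hf (by omega)]; omega
    rcases lt_trichotomy (key μ f ((0, w - 1))) (key μ f (pos (tabT f hf) (v + 1))) with h | h | h
    · have hk1 : key μ f (pos (tabT f hf) v) < key μ f ((0, w - 1)) :=
        key_lt_of_val_lt μ hc1 (by show Fv hf v < f 0 (w - 1); omega)
      have hrk1 := rk_lt_rk (cells_of_mem (c := (0, w - 1)) hecell) hk1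
      have hrk2 := rk_lt_rk hc2 h
      omega
    · have he : ((0, w - 1) : ℕ × ℕ) = pos (tabT f hf) (v + 1) :=
        key_inj μ (cells_of_mem (c := (0, w - 1)) hecell) hc2 hf.2.1 h
      rw [← he] at hrow
      omega
    · have : (pos (tabT f hf) (v + 1)).1 < ((0, w - 1) : ℕ × ℕ).1 :=
        row_lt_of_key_lt_of_val_eq μ h (by show Fv hf (v + 1) = f 0 (w - 1); omega)
      simp at this
  · intro heq
    have hrow : (pos (tabT f hf) v).1 < (pos (tabT f hf) (v + 1)).1 :=
      row_lt_of_key_lt_of_val_eq μ hkey heq.symm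
    exact ⟨pos (tabT f hf) v, hc1, pos (tabT f hf) (v + 1), hc2,
      (pos_spec (isSYT_tabT hf) hv1).2, (pos_spec (isSYT_tabT hf) hv2).2, hrow⟩

lemma Fv_one (hn : 1 ≤ μ.card) : Fv hf 1 = 1 := by
  have h1 : (1 : ℕ) ∈ Finset.Icc 1 μ.card := Finset.mem_Icc.mpr ⟨le_refl 1, hn⟩
  obtain ⟨hc1, hr1⟩ := pos_tab_spec hf h1
  have hlow : 1 ≤ Fv hf 1 := (hf.2.2.2 _ _ (mem_of_cells hc1)).1
  have hzcell : (0, (0 : ℕ)) ∈ μ := by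
    have : ∃ c, c ∈ μ.cells := Finset.card_pos.mp hn |>.exists_mem
    obtain ⟨c, hc⟩ := this
    exact μ.up_left_mem (Nat.zero_le _) (Nat.zero_le _) (mem_of_cells hc)
  have hk0 : 0 < μ.rowLen 0 := by rw [← YoungDiagram.mem_iff_lt_rowLen]; exact hzcell
  have hzval : f 0 0 = 1 := by rw [f_zero_row hf hk0]
  rcases le_or_gt (key μ f (pos (tabT f hf) 1)) (key μ f ((0, 0))) with h | h
  · have h2 : Fv hf 1 ≤ f 0 0 :=
      val_le_of_key_le μ (cells_of_mem (c := ((0 : ℕ), (0 : ℕ))) hzcell) h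
    omega
  · have ha := rk_lt_rk hc1 h
    have hb := rk_pos (f := f) (cells_of_mem (c := ((0 : ℕ), (0 : ℕ))) hzcell)
    omega

lemma Fv_top (hn : 1 ≤ μ.card) : Fv hf μ.card = μ.rowLen 0 := by
  have h1 : μ.card ∈ Finset.Icc 1 μ.card := Finset.mem_Icc.mpr ⟨hn, le_refl _⟩
  obtain ⟨hc1, hr1⟩ := pos_tab_spec hf h1
  have hub : Fv hf μ.card ≤ μ.rowLen 0 := (hf.2.2.2 _ _ (mem_of_cells hc1)).2
  have hzcell : (0, (0 : ℕ)) ∈ μ := by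
    have : ∃ c, c ∈ μ.cells := Finset.card_pos.mp hn |>.exists_mem
    obtain ⟨c, hc⟩ := this
    exact μ.up_left_mem (Nat.zero_le _) (Nat.zero_le _) (mem_of_cells hc)
  have hk : 1 ≤ μ.rowLen 0 := by
    rw [Nat.succ_le_iff, ← YoungDiagram.mem_iff_lt_rowLen]; exact hzcell
  have hecell : (0, μ.rowLen 0 - 1) ∈ μ := YoungDiagram.mem_iff_lt_rowLen.mpr (by omega)
  have heval : f 0 (μ.rowLen 0 - 1) = μ.rowLen 0 := by rw [f_zero_row hf (by omega)]; omega
  rcases le_or_gt (key μ f ((0, μ.rowLen 0 - 1))) (key μ f (pos (tabT f hf) μ.card)) with h | h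
  · have h3 : f 0 (μ.rowLen 0 - 1) ≤ Fv hf μ.card := val_le_of_key_le μ hc1 h
    omega
  · have ha := rk_lt_rk (cells_of_mem (c := ((0 : ℕ), μ.rowLen 0 - 1)) hecell) h
    have hb := rk_le (μ := μ) (f := f) (c := ((0 : ℕ), μ.rowLen 0 - 1))
    omega

/-- Counting +1 steps of a function along an interval. -/
lemma count_steps (F : ℕ → ℕ) : ∀ m a : ℕ,
    (∀ v ∈ Finset.Ico a (a + m), F (v + 1) = F v ∨ F (v + 1) = F v + 1) →
    F a ≤ F (a + m) ∧
      ((Finset.Ico a (a + m)).filter (fun v => F (v + 1) = F v + 1)).card + F a = F (a + m) := by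
  intro m
  induction m with
  | zero => intro a _; simp
  | succ m ih =>
    intro a h
    have hm := ih a (fun v hv => h v (by simp only [Finset.mem_Ico] at *; omega))
    have hstep := h (a + m) (by simp only [Finset.mem_Ico]; omega)
    have hins : Finset.Ico a (a + (m + 1)) = insert (a + m) (Finset.Ico a (a + m)) := by
      rw [show a + (m + 1) = (a + m) + 1 by omega, Nat.Ico_succ_right_eq_insert_Ico (by omega)]
    have hnotmem : a + m ∉ Finset.Ico a (a + m) := by simp
    have he : a + (m + 1) = (a + m) + 1 := by omega
    rw [hins, Finset.filter_insert, he]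
    rcases hstep with h0 | h1
    · rw [if_neg (by omega)]
      omega
    · rw [if_pos h1, Finset.card_insert_of_notMem (by
        intro hmem; exact hnotmem (Finset.mem_of_mem_filter _ hmem))]
      omega

lemma steps_tab {a m : ℕ} (ha : 1 ≤ a) (hm : a + m ≤ μ.card) :
    ∀ v ∈ Finset.Ico a (a + m), Fv hf (v + 1) = Fv hf v ∨ Fv hf (v + 1) = Fv hf v + 1 := by
  intro v hv
  simp only [Finset.mem_Ico] at hv
  exact step_tab hf (Finset.mem_Icc.mpr ⟨by omega, by omega⟩)

lemma card_des_add_nonDes (T : SemistandardYoungTableau μ) :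
    (desF T).card + (nonDesF T).card = μ.card - 1 := by
  rw [desF, nonDesF, Finset.card_filter_add_card_filter_not, Nat.card_Icc]
  omega

lemma rowLen_le_card : μ.rowLen 0 ≤ μ.card := by
  rw [YoungDiagram.rowLen_eq_card]
  exact Finset.card_le_card (by unfold YoungDiagram.row; exact Finset.filter_subset _ _)

lemma card_nonDes_tab (hn : 1 ≤ μ.card) :
    (nonDesF (tabT f hf)).card = μ.rowLen 0 - 1 := by
  have hfil : nonDesF (tabT f hf) =
      (Finset.Ico 1 (1 + (μ.card - 1))).filter (fun v => Fv hf (v + 1) = Fv hf v + 1) := by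
    rw [nonDesF, show 1 + (μ.card - 1) = (μ.card - 1) + 1 by omega, Finset.Ico_add_one_right_eq_Icc]
    apply Finset.filter_congr
    intro v hv
    have hd := des_iff hf hv
    have hstep := step_tab hf hv
    constructor
    · intro hnd
      rcases hstep with h0 | h1
      · exact absurd (hd.mpr h0) hnd
      · exact h1
    · intro h1
      intro hdes
      have := hd.mp hdes
      omega
  have hcount := (count_steps (Fv hf) (μ.card - 1) 1 (steps_tab hf (le_refl 1) (by omega))).2
  have hone := Fv_one hf hn
  have htop := Fv_top hf hn
  rw [show 1 + (μ.card - 1) = μ.card by omega] at hcount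
  rw [hfil, show 1 + (μ.card - 1) = μ.card by omega]
  omega


lemma card_des_tab : (desF (tabT f hf)).card + μ.rowLen 0 = μ.card := by
  rcases Nat.eq_zero_or_pos μ.card with h0 | hpos
  · have hk : μ.rowLen 0 = 0 := by
      by_contra hk
      have hcell : (0, (0 : ℕ)) ∈ μ := YoungDiagram.mem_iff_lt_rowLen.mpr (by omega)
      have h1 := Finset.card_pos.mpr ⟨((0 : ℕ), (0 : ℕ)), cells_of_mem hcell⟩
      have h2 : 0 < μ.card := h1
      omega
    have hd : desF (tabT f hf) = ∅ := by
      rw [desF, h0]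
      simp
    rw [hd, hk, h0]
    simp
  · have h1 := card_nonDes_tab hf hpos
    have h2 := card_des_add_nonDes (tabT f hf)
    have hzcell : (0, (0 : ℕ)) ∈ μ := by
      obtain ⟨c, hc⟩ := Finset.card_pos.mp hpos |>.exists_mem
      exact μ.up_left_mem (Nat.zero_le _) (Nat.zero_le _) (mem_of_cells hc)
    have hk : 1 ≤ μ.rowLen 0 := rowLen_pos hzcell
    have h3 := rowLen_le_card (μ := μ)
    omega

lemma fOf_tabT {c : ℕ × ℕ} (hc : c ∈ μ.cells) :
    fOf (tabT f hf) c.1 c.2 = f c.1 c.2 := by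
  have hn : 1 ≤ μ.card := Finset.card_pos.mpr ⟨c, hc⟩
  set v := rk μ f c with hv
  have hv1 : 1 ≤ v := rk_pos hc
  have hv2 : v ≤ μ.card := rk_le
  have hTc : tabT f hf c.1 c.2 = v := tabT_apply hf hc
  have hcpos : c = pos (tabT f hf) v :=
    pos_unique (isSYT_tabT hf) (Finset.mem_Icc.mpr ⟨hv1, hv2⟩) hc hTc
  have hfil : (nonDesF (tabT f hf)).filter (fun u => u < v) =
      (Finset.Ico 1 (1 + (v - 1))).filter (fun u => Fv hf (u + 1) = Fv hf u + 1) := by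
    rw [show 1 + (v - 1) = v by omega]
    ext u
    simp only [nonDesF, Finset.mem_filter, Finset.mem_Icc, Finset.mem_Ico]
    constructor
    · rintro ⟨⟨⟨hu1, hu2⟩, hnd⟩, huv⟩
      refine ⟨⟨hu1, huv⟩, ?_⟩
      rcases step_tab hf (Finset.mem_Icc.mpr ⟨hu1, hu2⟩) with h0 | h1
      · exact absurd ((des_iff hf (Finset.mem_Icc.mpr ⟨hu1, hu2⟩)).mpr h0) hnd
      · exact h1
    · rintro ⟨⟨hu1, huv⟩, hstep⟩
      have humem : u ∈ Finset.Icc 1 (μ.card - 1) := Finset.mem_Icc.mpr ⟨hu1, by omega⟩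
      refine ⟨⟨⟨hu1, by omega⟩, fun hdes => ?_⟩, huv⟩
      have := (des_iff hf humem).mp hdes
      omega
  have hcount := (count_steps (Fv hf) (v - 1) 1 (steps_tab hf (le_refl 1) (by omega))).2
  have hone := Fv_one hf hn
  have hFvv : Fv hf v = f c.1 c.2 := by rw [Fv, ← hcpos]
  rw [show 1 + (v - 1) = v by omega] at hcount hfil
  rw [fOf_apply (mem_of_cells hc), hTc, hfil]
  omega

end FtoSYT

end Stmt18

open Stmt18 in
theorem stmt18 (μ : YoungDiagram) :
    Nat.card {T : SemistandardYoungTableau μ //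
        IsSYT T ∧ Nat.card (sytDesSet T) + μ.rowLen 0 = μ.card} =
      Nat.card {f : ℕ → ℕ → ℕ //
        (∀ i j : ℕ, (i, j) ∉ μ → f i j = 0) ∧
        (∀ i j1 j2 : ℕ, j1 < j2 → (i, j2) ∈ μ → f i j1 < f i j2) ∧
        (∀ i1 i2 j : ℕ, i1 < i2 → (i2, j) ∈ μ → f i1 j ≤ f i2 j) ∧
        (∀ i j : ℕ, (i, j) ∈ μ → 1 ≤ f i j ∧ f i j ≤ μ.rowLen 0)} := by
  refine (Nat.card_eq_of_bijective
    (fun x => ⟨tabT x.1 x.2, isSYT_tabT x.2, by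
      rw [card_sytDesSet (isSYT_tabT x.2)]; exact card_des_tab x.2⟩) ⟨?_, ?_⟩).symm
  · rintro ⟨f, hf⟩ ⟨g, hg⟩ h
    simp only [Subtype.mk.injEq] at h ⊢
    funext i j
    by_cases hc : (i, j) ∈ μ
    · have h1 := fOf_tabT (μ := μ) (hf := hf) (c := (i, j)) (cells_of_mem hc)
      have h2 := fOf_tabT (μ := μ) (hf := hg) (c := (i, j)) (cells_of_mem hc)
      rw [← h1, ← h2, h]
    · rw [hf.1 i j hc, hg.1 i j hc]
  · rintro ⟨T, hT, hdes⟩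
    have hdes' : (desF T).card + μ.rowLen 0 = μ.card := by
      rw [← card_sytDesSet hT]; exact hdes
    have hgood : Good μ (fOf T) := good_fOf hT hdes'
    refine ⟨⟨fOf T, hgood⟩, ?_⟩
    apply Subtype.ext
    show tabT (fOf T) hgood = T
    apply SemistandardYoungTableau.ext
    intro i j
    by_cases hc : (i, j) ∈ μ
    · have := tabT_apply (μ := μ) hgood (c := (i, j)) (cells_of_mem hc)
      rw [this, rk_fOf hT (cells_of_mem hc)]
    · show (if (i, j) ∈ μ then rk μ (fOf T) (i, j) else 0) = T i j
      rw [if_neg hc, T.zeros hc]
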